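/- Define W⁽¹⁾(ρ₁,ρ₂) = -(1/(2π)) cot(π(ρ₁+ρ₂)) sin²(πρ₂) - ρ₂/4 + (1/(4π)) sin(2πρ₂) and W⁽²⁾(ρ₁,ρ₂) = W⁽¹⁾(ρ₂,ρ₁). Then for every ρ in the open triangle T, the trace of the Jacobian matrix H_W(ρ) = (∂_{ρⱼ} W⁽ⁱ⁾(ρ)) equals (1/2)·(sin²(πρ₁)+sin²(πρ₂))/sin²(π(ρ₁+ρ₂)), which is strictly positive. -/

import Mathlib

open Real

/-- First component of the vector field `W`. -/
noncomputable def W1 (ρ₁ ρ₂ : ℝ) : ℝ :=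
  -(1 / (2 * π)) * Real.cot (π * (ρ₁ + ρ₂)) * (Real.sin (π * ρ₂)) ^ 2
    - ρ₂ / 4 + (1 / (4 * π)) * Real.sin (2 * π * ρ₂)

/-- Second component of the vector field `W`. -/
noncomputable def W2 (ρ₁ ρ₂ : ℝ) : ℝ := W1 ρ₂ ρ₁

lemma hasDerivAt_cot' {x : ℝ} (h : Real.sin x ≠ 0) :
    HasDerivAt Real.cot (-1 / (Real.sin x) ^ 2) x := by
  have hd := (Real.hasDerivAt_cos x).div (Real.hasDerivAt_sin x) h
  have : Real.cot = fun y => Real.cos y / Real.sin y := by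
    funext y; exact Real.cot_eq_cos_div_sin y
  rw [this]
  refine HasDerivAt.congr_deriv hd ?_
  have hpy := Real.sin_sq_add_cos_sq x
  field_simp
  nlinarith [hpy]

lemma deriv_W1_left (ρ₁ ρ₂ : ℝ) (hs : Real.sin (π * (ρ₁ + ρ₂)) ≠ 0) :
    deriv (fun a => W1 a ρ₂) ρ₁
      = (Real.sin (π * ρ₂)) ^ 2 / (2 * (Real.sin (π * (ρ₁ + ρ₂))) ^ 2) := by
  have hπ : (0:ℝ) < π := Real.pi_pos
  have hinner : HasDerivAt (fun a : ℝ => π * (a + ρ₂)) π ρ₁ := by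
    simpa using ((hasDerivAt_id ρ₁).add_const ρ₂).const_mul π
  have hcot : HasDerivAt (fun a : ℝ => Real.cot (π * (a + ρ₂)))
      ((-1 / (Real.sin (π * (ρ₁ + ρ₂))) ^ 2) * π) ρ₁ :=
    by have hc := (hasDerivAt_cot' hs).comp ρ₁ hinner; exact hc
  have h : HasDerivAt (fun a => W1 a ρ₂)
      (-(1 / (2 * π)) * ((-1 / (Real.sin (π * (ρ₁ + ρ₂))) ^ 2) * π)
        * (Real.sin (π * ρ₂)) ^ 2) ρ₁ := by
    unfold W1
    exact (((hcot.const_mul (-(1 / (2 * π)))).mul_const _).sub_const (ρ₂ / 4)).add_const _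
  rw [h.deriv]
  field_simp

/-- The trace of the Jacobian matrix `H_W(ρ)` equals
`(1/2)(sin²(πρ₁)+sin²(πρ₂))/sin²(π(ρ₁+ρ₂))`, which is strictly positive on `T`. -/
theorem trace_HW (ρ₁ ρ₂ : ℝ) (h1 : 0 < ρ₁) (h2 : 0 < ρ₂) (h12 : ρ₁ + ρ₂ < 1) :
    deriv (fun a => W1 a ρ₂) ρ₁ + deriv (fun b => W2 ρ₁ b) ρ₂
      = (1 / 2) * ((Real.sin (π * ρ₁)) ^ 2 + (Real.sin (π * ρ₂)) ^ 2)
          / (Real.sin (π * (ρ₁ + ρ₂))) ^ 2 ∧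
    0 < (1 / 2) * ((Real.sin (π * ρ₁)) ^ 2 + (Real.sin (π * ρ₂)) ^ 2)
          / (Real.sin (π * (ρ₁ + ρ₂))) ^ 2 := by
  have hπ : (0:ℝ) < π := Real.pi_pos
  have hs : Real.sin (π * (ρ₁ + ρ₂)) ≠ 0 := by
    have : 0 < Real.sin (π * (ρ₁ + ρ₂)) := by
      apply Real.sin_pos_of_pos_of_lt_pi
      · positivity
      · nlinarith
    linarith
  have hd1 := deriv_W1_left ρ₁ ρ₂ hs
  have hs' : Real.sin (π * (ρ₂ + ρ₁)) ≠ 0 := by rwa [add_comm]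
  have hd2 := deriv_W1_left ρ₂ ρ₁ hs'
  have hW2 : (fun b => W2 ρ₁ b) = fun b => W1 b ρ₁ := rfl
  rw [hW2] at *
  constructor
  · rw [hd1, hd2, add_comm ρ₂ ρ₁]
    have hss : (Real.sin (π * (ρ₁ + ρ₂))) ^ 2 ≠ 0 := pow_ne_zero _ hs
    field_simp
    ring
  · have h1' : 0 < Real.sin (π * ρ₁) := by
      apply Real.sin_pos_of_pos_of_lt_pi
      · positivity
      · nlinarith
    have hss : 0 < (Real.sin (π * (ρ₁ + ρ₂))) ^ 2 := by positivity
    positivity
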